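/- arXiv:2111.07415 — 2 statements merged into one kernel-verified Lean document; each statement's English description precedes it below -/
import Mathlib

section
/- For every m ≥ 0, N(m) = F(⌊m/2⌋ + 2) · F(⌈m/2⌉ + 2), where F is the Fibonacci sequence with F(1) = F(2) = 1; this holds because a binary word satisfies the RR constraint (no two 0's at distance exactly 2) if and only if each of its two interleaved subsequences (even-indexed positions and odd-indexed positions) contains no two adjacent 0's. -/
/-- The RR constraint: no index `i` with `i + 2 ≤ m - 1` such that `c i = 0` and `c (i+2) = 0`
(bit `false` plays the role of `0`, bit `true` the role of `1`). -/
def RRok (m : ℕ) (c : Fin m → Bool) : Prop :=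
  ∀ i j : Fin m, (j : ℕ) = (i : ℕ) + 2 → ¬(c i = false ∧ c j = false)

instance (m : ℕ) : DecidablePred (RRok m) := fun c => by
  unfold RRok; infer_instance

/-- The LOCO code `RC_m`: all binary words of length `m` satisfying the RR constraint. -/
def RC (m : ℕ) : Finset (Fin m → Bool) := Finset.univ.filter (RRok m)

/-- `N m = |RC_m|`. -/
def N (m : ℕ) : ℕ := (RC m).card

/-- No adjacent zeros. -/
def NAp (k : ℕ) (c : Fin k → Bool) : Prop :=
  ∀ i j : Fin k, (j : ℕ) = (i : ℕ) + 1 → ¬(c i = false ∧ c j = false)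

instance (k : ℕ) : DecidablePred (NAp k) := fun c => by
  unfold NAp; infer_instance

def NA (k : ℕ) : Finset (Fin k → Bool) := Finset.univ.filter (NAp k)

lemma fcongr {n : ℕ} (c : Fin n → Bool) {i j : Fin n} (h : (i : ℕ) = (j : ℕ)) :
    c i = c j := by
  congr 1; exact Fin.ext h

lemma mem_NA {k : ℕ} {c : Fin k → Bool} : c ∈ NA k ↔ NAp k c := by
  simp [NA]

lemma NA_rec (k : ℕ) : (NA (k + 2)).card = (NA (k + 1)).card + (NA k).card := by
  classical
  rw [← Finset.card_filter_add_card_filter_not (s := NA (k + 2))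
    (p := fun c => c 0 = true)]
  congr 1
  · -- first bit true ↔ words of length k+1
    refine Finset.card_bij'
      (fun c _ => fun i : Fin (k + 1) => c ⟨(i : ℕ) + 1, by omega⟩)
      (fun d _ => fun i : Fin (k + 2) =>
        if h : (i : ℕ) = 0 then true else d ⟨(i : ℕ) - 1, by omega⟩) ?_ ?_ ?_ ?_
    · intro c hc
      simp only [Finset.mem_filter, mem_NA] at hc ⊢
      rcases hc with ⟨h1, _⟩
      intro i j hij
      exact h1 ⟨(i : ℕ) + 1, by omega⟩ ⟨(j : ℕ) + 1, by omega⟩ (by simpa using by omega)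
    · intro d hd
      rw [mem_NA] at hd
      simp only [Finset.mem_filter, mem_NA]
      constructor
      · intro i j hij
        beta_reduce
        by_cases hi : (i : ℕ) = 0
        · rw [dif_pos hi]; simp
        · rw [dif_neg hi, dif_neg (by omega : ¬ (j : ℕ) = 0)]
          exact hd ⟨(i : ℕ) - 1, by omega⟩ ⟨(j : ℕ) - 1, by omega⟩ (by simp; omega)
      · simp
    · intro c hc
      simp only [Finset.mem_filter, mem_NA] at hc
      funext i
      beta_reduce
      by_cases hi : (i : ℕ) = 0
      · rw [dif_pos hi]
        have : c i = c 0 := fcongr c (by simpa using hi)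
        rw [this, hc.2]
      · rw [dif_neg hi]
        exact fcongr c (by simp; omega)
    · intro d hd
      funext i
      beta_reduce
      rw [dif_neg (by omega : ¬ ((i : ℕ) + 1) = 0)]
      exact fcongr d (by simp)
  · -- first bit false ↔ words of length k
    refine Finset.card_bij'
      (fun c _ => fun i : Fin k => c ⟨(i : ℕ) + 2, by omega⟩)
      (fun d _ => fun i : Fin (k + 2) =>
        if h0 : (i : ℕ) = 0 then false
        else if h1 : (i : ℕ) = 1 then true
        else d ⟨(i : ℕ) - 2, by omega⟩) ?_ ?_ ?_ ?_
    · intro c hc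
      simp only [Finset.mem_filter, mem_NA] at hc ⊢
      rcases hc with ⟨h1, _⟩
      intro i j hij
      exact h1 ⟨(i : ℕ) + 2, by omega⟩ ⟨(j : ℕ) + 2, by omega⟩ (by simp; omega)
    · intro d hd
      rw [mem_NA] at hd
      simp only [Finset.mem_filter, mem_NA]
      constructor
      · intro i j hij
        beta_reduce
        by_cases hi0 : (i : ℕ) = 0
        · rw [dif_pos hi0, dif_neg (by omega : ¬ (j : ℕ) = 0), dif_pos (by omega : (j : ℕ) = 1)]
          simp
        · by_cases hi1 : (i : ℕ) = 1
          · rw [dif_neg hi0, dif_pos hi1]; simp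
          · rw [dif_neg hi0, dif_neg hi1, dif_neg (by omega : ¬ (j : ℕ) = 0),
              dif_neg (by omega : ¬ (j : ℕ) = 1)]
            exact hd ⟨(i : ℕ) - 2, by omega⟩ ⟨(j : ℕ) - 2, by omega⟩ (by simp; omega)
      · simp
    · intro c hc
      simp only [Finset.mem_filter, mem_NA] at hc
      rcases hc with ⟨hna, h0⟩
      simp only [Bool.not_eq_true] at h0
      funext i
      beta_reduce
      by_cases hi0 : (i : ℕ) = 0
      · rw [dif_pos hi0]
        rw [fcongr c (show (i : ℕ) = ((0 : Fin (k + 2)) : ℕ) by simpa using hi0), h0]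
      · by_cases hi1 : (i : ℕ) = 1
        · rw [dif_neg hi0, dif_pos hi1]
          have h01 := hna 0 ⟨1, by omega⟩ (by simp)
          have hc1 : c ⟨1, by omega⟩ = true := by
            rcases Bool.eq_false_or_eq_true (c ⟨1, by omega⟩) with h | h
            · exact h
            · exact absurd ⟨h0, h⟩ h01
          rw [fcongr c (show (i : ℕ) = ((⟨1, by omega⟩ : Fin (k + 2)) : ℕ) from hi1), hc1]
        · rw [dif_neg hi0, dif_neg hi1]
          exact fcongr c (by simp; omega)
    · intro d hd
      funext i
      beta_reduce
      rw [dif_neg (by omega : ¬ ((i : ℕ) + 2) = 0), dif_neg (by omega : ¬ ((i : ℕ) + 2) = 1)]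
      exact fcongr d (by simp)

lemma NA_card : ∀ k, (NA k).card = Nat.fib (k + 2) := by
  intro k
  induction k using Nat.strong_induction_on with
  | _ k ih =>
    match k with
    | 0 => decide
    | 1 => decide
    | (n + 2) =>
      rw [NA_rec, ih (n + 1) (by omega), ih n (by omega)]
      have h := Nat.fib_add_two (n := n + 2)
      have e : n + 1 + 2 = n + 2 + 1 := by omega
      rw [e]
      omega

lemma RR_iff (m : ℕ) (c : Fin m → Bool) : RRok m c ↔
    ((∀ k : ℕ, ∀ h : 2 * k + 2 < m,
        ¬(c ⟨2 * k, Nat.lt_of_le_of_lt (Nat.le_add_right _ 2) h⟩ = false ∧ c ⟨2 * k + 2, h⟩ = false)) ∧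
     (∀ k : ℕ, ∀ h : 2 * k + 3 < m,
        ¬(c ⟨2 * k + 1, Nat.lt_of_le_of_lt (Nat.le_add_right (2 * k + 1) 2) h⟩ = false ∧ c ⟨2 * k + 3, h⟩ = false))) := by
  constructor
  · intro h
    exact ⟨fun k hk => h ⟨2 * k, by omega⟩ ⟨2 * k + 2, hk⟩ rfl,
           fun k hk => h ⟨2 * k + 1, by omega⟩ ⟨2 * k + 3, hk⟩ rfl⟩
  · rintro ⟨h1, h2⟩ i j hij ⟨e1, e2⟩
    rcases Nat.even_or_odd (i : ℕ) with he | ho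
    · have hm : (i : ℕ) % 2 = 0 := Nat.even_iff.mp he
      refine h1 ((i : ℕ) / 2) (by omega) ⟨?_, ?_⟩
      · exact (fcongr c (by simp only [Fin.val_mk]; omega)).trans e1
      · exact (fcongr c (by simp only [Fin.val_mk]; omega)).trans e2
    · have hm : (i : ℕ) % 2 = 1 := Nat.odd_iff.mp ho
      refine h2 ((i : ℕ) / 2) (by omega) ⟨?_, ?_⟩
      · exact (fcongr c (by simp only [Fin.val_mk]; omega)).trans e1
      · exact (fcongr c (by simp only [Fin.val_mk]; omega)).trans e2

lemma N_eq (m : ℕ) : N m = (NA (m / 2)).card * (NA ((m + 1) / 2)).card := by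
  classical
  rw [N, ← Finset.card_product]
  refine Finset.card_bij'
    (fun c _ => (fun i : Fin (m / 2) => c ⟨2 * (i : ℕ) + 1, by omega⟩,
                 fun i : Fin ((m + 1) / 2) => c ⟨2 * (i : ℕ), by omega⟩))
    (fun p _ => fun i : Fin m =>
      if h : (i : ℕ) % 2 = 0 then p.2 ⟨(i : ℕ) / 2, by omega⟩
      else p.1 ⟨(i : ℕ) / 2, by omega⟩) ?_ ?_ ?_ ?_
  · intro c hc
    simp only [RC, Finset.mem_filter] at hc
    have h := hc.2
    simp only [Finset.mem_product, mem_NA]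
    constructor
    · intro i j hij
      have := h ⟨2 * (i : ℕ) + 1, by omega⟩ ⟨2 * (i : ℕ) + 3, by omega⟩ rfl
      intro ⟨e1, e2⟩
      exact this ⟨e1, (fcongr c (by simp; omega)).trans e2⟩
    · intro i j hij
      have := h ⟨2 * (i : ℕ), by omega⟩ ⟨2 * (i : ℕ) + 2, by omega⟩ rfl
      intro ⟨e1, e2⟩
      exact this ⟨e1, (fcongr c (by simp; omega)).trans e2⟩
  · intro p hp
    simp only [Finset.mem_product, mem_NA] at hp
    simp only [RC, Finset.mem_filter, Finset.mem_univ, true_and]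
    intro i j hij ⟨e1, e2⟩
    beta_reduce at e1 e2
    by_cases hi : (i : ℕ) % 2 = 0
    · rw [dif_pos hi] at e1
      rw [dif_pos (show (j : ℕ) % 2 = 0 by omega)] at e2
      exact hp.2 ⟨(i : ℕ) / 2, by omega⟩ ⟨(j : ℕ) / 2, by omega⟩
        (by simp only [Fin.val_mk]; omega) ⟨e1, e2⟩
    · rw [dif_neg hi] at e1
      rw [dif_neg (show ¬ (j : ℕ) % 2 = 0 by omega)] at e2
      exact hp.1 ⟨(i : ℕ) / 2, by omega⟩ ⟨(j : ℕ) / 2, by omega⟩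
        (by simp only [Fin.val_mk]; omega) ⟨e1, e2⟩
  · intro c hc
    funext i
    beta_reduce
    by_cases hi : (i : ℕ) % 2 = 0
    · rw [dif_pos hi]
      exact fcongr c (by simp only [Fin.val_mk]; omega)
    · rw [dif_neg hi]
      exact fcongr c (by simp only [Fin.val_mk]; omega)
  · intro p hp
    refine Prod.ext ?_ ?_
    · funext i
      beta_reduce
      simp only [Fin.val_mk]
      rw [dif_neg (show ¬ (2 * (i : ℕ) + 1) % 2 = 0 by omega)]
      exact fcongr p.1 (by simp only [Fin.val_mk]; omega)
    · funext i
      beta_reduce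
      simp only [Fin.val_mk]
      rw [dif_pos (show (2 * (i : ℕ)) % 2 = 0 by omega)]
      exact fcongr p.2 (by simp only [Fin.val_mk]; omega)

/-- `N m = F(⌊m/2⌋ + 2) ⬝ F(⌈m/2⌉ + 2)`, which holds because a word satisfies the RR
constraint iff each of its two interleaved subsequences (even-indexed and odd-indexed
positions) contains no two adjacent `0`'s. -/
theorem stmt10 :
    (∀ m : ℕ, N m = Nat.fib (m / 2 + 2) * Nat.fib ((m + 1) / 2 + 2)) ∧
    (∀ m : ℕ, ∀ c : Fin m → Bool, RRok m c ↔
      ((∀ k : ℕ, ∀ h : 2 * k + 2 < m,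
          ¬(c ⟨2 * k, by omega⟩ = false ∧ c ⟨2 * k + 2, h⟩ = false)) ∧
       (∀ k : ℕ, ∀ h : 2 * k + 3 < m,
          ¬(c ⟨2 * k + 1, by omega⟩ = false ∧ c ⟨2 * k + 3, h⟩ = false)))) := by
  constructor
  · intro m
    rw [N_eq, NA_card, NA_card]
  · exact RR_iff
end

section
/- The 1D RR-LOCO coding scheme is capacity-achieving on the left-most page: lim_{m→∞} ⌊log₂(N(m) − 1)⌋ / (m + 2) = log₂((1 + √5)/2), where ⌊log₂(N(m) − 1)⌋ is the message length per codeword after removing the all-ones codeword and m + 2 accounts for two bridging bits. -/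
/-- no two adjacent zeros -/
def okA (n : ℕ) (d : Fin n → Bool) : Prop :=
  ∀ i j : Fin n, (j : ℕ) = (i : ℕ) + 1 → ¬(d i = false ∧ d j = false)

instance (n : ℕ) : DecidablePred (okA n) := fun d => by
  unfold okA; infer_instance

def AS (n : ℕ) : Finset (Fin n → Bool) := Finset.univ.filter (okA n)

lemma h1 (n : ℕ) : ((AS (n+2)).filter (fun d => d (Fin.last (n+1)) = true)).card
      = (AS (n+1)).card := by
    apply Finset.card_nbij' (fun d => d ∘ Fin.castSucc)
      (fun e => Fin.snoc e true)
    · intro d hd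
      simp only [AS, Finset.mem_coe, Finset.mem_filter, Finset.mem_univ, true_and] at hd ⊢
      intro i j hij hc
      exact hd.1 i.castSucc j.castSucc (by simpa using hij) (by simpa using hc)
    · intro e he
      simp only [AS, Finset.mem_coe, Finset.mem_filter, Finset.mem_univ, true_and] at he ⊢
      constructor
      · intro i j hij hc
        by_cases hjl : (j : ℕ) = n + 1
        · have : j = Fin.last (n+1) := Fin.ext hjl
          rw [this, Fin.snoc_last] at hc
          exact absurd hc.2 (by simp)
        · have hj' : (j : ℕ) < n + 1 := lt_of_le_of_ne (Nat.lt_succ_iff.mp j.isLt) hjl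
          have hi' : (i : ℕ) < n + 1 := by omega
          have e1 : i = Fin.castSucc ⟨(i : ℕ), hi'⟩ := Fin.ext rfl
          have e2 : j = Fin.castSucc ⟨(j : ℕ), hj'⟩ := Fin.ext rfl
          rw [e1, e2, Fin.snoc_castSucc, Fin.snoc_castSucc] at hc
          exact he ⟨(i : ℕ), hi'⟩ ⟨(j : ℕ), hj'⟩ hij hc
      · exact Fin.snoc_last _ _
    · intro d hd
      simp only [AS, Finset.mem_coe, Finset.mem_filter, Finset.mem_univ, true_and] at hd
      funext x
      beta_reduce
      refine Fin.lastCases ?_ (fun y => ?_) x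
      · rw [Fin.snoc_last, hd.2]
      · simp [Fin.snoc_castSucc]
    · intro e he
      funext x
      simp [Fin.snoc_castSucc]

lemma h2 (n : ℕ) : ((AS (n+2)).filter (fun d => ¬ d (Fin.last (n+1)) = true)).card
      = (AS n).card := by
    apply Finset.card_nbij' (fun d => fun k => d k.castSucc.castSucc)
      (fun e => Fin.snoc (Fin.snoc e true) false)
    · intro d hd
      simp only [AS, Finset.mem_coe, Finset.mem_filter, Finset.mem_univ, true_and] at hd ⊢
      intro i j hij hc
      exact hd.1 i.castSucc.castSucc j.castSucc.castSucc (by simpa using hij)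
        (by simpa using hc)
    · intro e he
      simp only [AS, Finset.mem_coe, Finset.mem_filter, Finset.mem_univ, true_and] at he ⊢
      constructor
      · intro i j hij hc
        by_cases hjl : (j : ℕ) = n + 1
        · have hi : i = Fin.castSucc (Fin.last n) := Fin.ext (by simp; omega)
          rw [hi, Fin.snoc_castSucc, Fin.snoc_last] at hc
          exact absurd hc.1 (by simp)
        · have hj' : (j : ℕ) < n + 1 := lt_of_le_of_ne (Nat.lt_succ_iff.mp j.isLt) hjl
          by_cases hjn : (j : ℕ) = n
          · have hj2 : j = Fin.castSucc (Fin.last n) := Fin.ext (by simpa using hjn)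
            rw [hj2, Fin.snoc_castSucc, Fin.snoc_last] at hc
            exact absurd hc.2 (by simp)
          · have hj3 : (j : ℕ) < n := by omega
            have hi3 : (i : ℕ) < n := by omega
            have e1 : i = (Fin.castSucc (Fin.castSucc ⟨(i : ℕ), hi3⟩)) := Fin.ext rfl
            have e2 : j = (Fin.castSucc (Fin.castSucc ⟨(j : ℕ), hj3⟩)) := Fin.ext rfl
            rw [e1, e2, Fin.snoc_castSucc, Fin.snoc_castSucc, Fin.snoc_castSucc,
              Fin.snoc_castSucc] at hc
            exact he ⟨(i : ℕ), hi3⟩ ⟨(j : ℕ), hj3⟩ hij hc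
      · simp [Fin.snoc_last]
    · intro d hd
      simp only [AS, Finset.mem_coe, Finset.mem_filter, Finset.mem_univ, true_and] at hd
      have hlast : d (Fin.last (n+1)) = false := by
        cases h : d (Fin.last (n+1)) with
        | false => rfl
        | true => exact absurd h hd.2
      funext x
      beta_reduce
      refine Fin.lastCases ?_ (fun y => ?_) x
      · rw [Fin.snoc_last, hlast]
      · rw [Fin.snoc_castSucc]
        refine Fin.lastCases ?_ (fun z => ?_) y
        · rw [Fin.snoc_last]
          have hn : d (Fin.castSucc (Fin.last n)) ≠ false := by
            intro hf
            exact hd.1 (Fin.castSucc (Fin.last n)) (Fin.last (n+1)) (by simp)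
              ⟨hf, hlast⟩
          cases h : d (Fin.castSucc (Fin.last n)) with
          | false => exact absurd h hn
          | true => rfl
        · simp [Fin.snoc_castSucc]
    · intro e he
      funext k
      simp [Fin.snoc_castSucc]

lemma AS_card_rec (n : ℕ) : (AS (n+2)).card = (AS (n+1)).card + (AS n).card := by
  have hu : ((AS (n+2)).filter (fun d => d (Fin.last (n+1)) = true))
      ∪ ((AS (n+2)).filter (fun d => ¬ d (Fin.last (n+1)) = true)) = AS (n+2) :=
    Finset.filter_union_filter_not_eq _ _
  have hd : Disjoint ((AS (n+2)).filter (fun d => d (Fin.last (n+1)) = true))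
      ((AS (n+2)).filter (fun d => ¬ d (Fin.last (n+1)) = true)) :=
    Finset.disjoint_filter_filter_not _ _ _
  rw [← hu, Finset.card_union_of_disjoint hd, h1 n, h2 n]


def A (n : ℕ) : ℕ := (AS n).card

lemma A_fib : ∀ n, A n = Nat.fib (n + 2)
  | 0 => by decide
  | 1 => by decide
  | (n+2) => by
      have h : A (n+2) = A (n+1) + A n := AS_card_rec n
      have h1 : A (n+1) = Nat.fib (n+3) := A_fib (n+1)
      have h2 : A n = Nat.fib (n+2) := A_fib n
      have h3 : Nat.fib (n+4) = Nat.fib (n+2) + Nat.fib (n+3) := Nat.fib_add_two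
      show A (n+2) = Nat.fib (n+4)
      omega

def toPair (m : ℕ) (c : Fin m → Bool) :
    (Fin ((m+1)/2) → Bool) × (Fin (m/2) → Bool) :=
  (fun j => c ⟨2*(j:ℕ), by have := j.isLt; omega⟩,
   fun j => c ⟨2*(j:ℕ)+1, by have := j.isLt; omega⟩)

def ofPair (m : ℕ) (p : (Fin ((m+1)/2) → Bool) × (Fin (m/2) → Bool)) :
    Fin m → Bool := fun i =>
  if h : (i:ℕ) % 2 = 0
    then p.1 ⟨(i:ℕ)/2, by have := i.isLt; omega⟩
    else p.2 ⟨(i:ℕ)/2, by have := i.isLt; omega⟩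

lemma N_eq_prod (m : ℕ) : N m = A ((m+1)/2) * A (m/2) := by
  rw [N, A, A, ← Finset.card_product]
  apply Finset.card_nbij' (toPair m) (ofPair m)
  · intro c hc
    simp only [RC, AS, Finset.mem_coe, Finset.mem_filter, Finset.mem_univ, true_and,
      Finset.mem_product, toPair] at hc ⊢
    constructor
    · intro a b hab hcon
      exact hc ⟨2*(a:ℕ), by have := a.isLt; omega⟩ ⟨2*(b:ℕ), by have := b.isLt; omega⟩
        (by simp; omega) hcon
    · intro a b hab hcon
      exact hc ⟨2*(a:ℕ)+1, by have := a.isLt; omega⟩ ⟨2*(b:ℕ)+1, by have := b.isLt; omega⟩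
        (by simp; omega) hcon
  · intro p hp
    simp only [RC, AS, Finset.mem_coe, Finset.mem_filter, Finset.mem_univ, true_and,
      Finset.mem_product] at hp ⊢
    intro i j hij hcon
    simp only [ofPair] at hcon
    by_cases h : (i:ℕ) % 2 = 0
    · have h2 : (j:ℕ) % 2 = 0 := by omega
      rw [dif_pos h, dif_pos h2] at hcon
      exact hp.1 ⟨(i:ℕ)/2, by have := i.isLt; omega⟩ ⟨(j:ℕ)/2, by have := j.isLt; omega⟩
        (by simp; omega) hcon
    · have h2 : ¬ (j:ℕ) % 2 = 0 := by omega
      rw [dif_neg h, dif_neg h2] at hcon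
      exact hp.2 ⟨(i:ℕ)/2, by have := i.isLt; omega⟩ ⟨(j:ℕ)/2, by have := j.isLt; omega⟩
        (by simp; omega) hcon
  · intro c hc
    funext i
    simp only [ofPair, toPair]
    by_cases h : (i:ℕ) % 2 = 0
    · rw [dif_pos h]
      congr 1
      exact Fin.ext (by simp; omega)
    · rw [dif_neg h]
      congr 1
      exact Fin.ext (by simp; omega)
  · intro p hp
    refine Prod.ext ?_ ?_
    · funext j
      have h : (2*(j:ℕ)) % 2 = 0 := by omega
      simp only [toPair, ofPair]
      rw [dif_pos h]
      exact congrArg p.1 (Fin.ext (show 2*(j:ℕ)/2 = (j:ℕ) by omega))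
    · funext j
      have h : ¬ (2*(j:ℕ)+1) % 2 = 0 := by omega
      simp only [toPair, ofPair]
      rw [dif_neg h]
      exact congrArg p.2 (Fin.ext (show (2*(j:ℕ)+1)/2 = (j:ℕ) by omega))

lemma N_fib (m : ℕ) : N m = Nat.fib ((m+1)/2 + 2) * Nat.fib (m/2 + 2) := by
  rw [N_eq_prod, A_fib, A_fib]

open Real goldenRatio Filter

lemma gold_pow_rec (k : ℕ) : goldenRatio ^ (k+2) = goldenRatio ^ (k+1) + goldenRatio ^ k := by
  have h := goldenRatio_pow_sub_goldenRatio_pow k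
  linarith

lemma fib_ge : ∀ n : ℕ, goldenRatio ^ n ≤ (Nat.fib (n+2) : ℝ)
  | 0 => by norm_num
  | 1 => by
      have := goldenRatio_lt_two
      norm_num [Nat.fib]
      linarith
  | (n+2) => by
      have h1 := fib_ge (n+1)
      have h2 := fib_ge n
      have h3 : (Nat.fib (n+4) : ℝ) = (Nat.fib (n+2) : ℝ) + (Nat.fib (n+3) : ℝ) := by
        have : Nat.fib (n+4) = Nat.fib (n+2) + Nat.fib (n+3) := Nat.fib_add_two
        exact_mod_cast this
      have h4 := gold_pow_rec n
      show goldenRatio ^ (n+2) ≤ (Nat.fib (n+4) : ℝ)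
      rw [h4, h3]
      have h5 : (Nat.fib (n+1+2) : ℝ) = (Nat.fib (n+3) : ℝ) := by norm_num
      linarith [h1, h2]

lemma fib_le : ∀ n : ℕ, (Nat.fib (n+2) : ℝ) ≤ goldenRatio ^ (n+1)
  | 0 => by
      norm_num [Nat.fib]
      linarith [one_lt_goldenRatio]
  | 1 => by
      have := one_lt_goldenRatio
      have hsq : goldenRatio ^ 2 = goldenRatio + 1 := goldenRatio_sq
      norm_num [Nat.fib]
      nlinarith
  | (n+2) => by
      have h1 := fib_le (n+1)
      have h2 := fib_le n
      have h3 : (Nat.fib (n+4) : ℝ) = (Nat.fib (n+2) : ℝ) + (Nat.fib (n+3) : ℝ) := by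
        have : Nat.fib (n+4) = Nat.fib (n+2) + Nat.fib (n+3) := Nat.fib_add_two
        exact_mod_cast this
      have h4 := gold_pow_rec (n+1)
      show (Nat.fib (n+4) : ℝ) ≤ goldenRatio ^ (n+3)
      rw [h3, h4]
      have h5 : (Nat.fib (n+1+2) : ℝ) = (Nat.fib (n+3) : ℝ) := by norm_num
      linarith [h1, h2]

lemma N_ge (m : ℕ) : goldenRatio ^ m ≤ (N m : ℝ) := by
  rw [N_fib]
  push_cast
  have hsum : (m+1)/2 + m/2 = m := by omega
  calc goldenRatio ^ m = goldenRatio ^ ((m+1)/2) * goldenRatio ^ (m/2) := by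
        rw [← pow_add, hsum]
    _ ≤ (Nat.fib ((m+1)/2 + 2) : ℝ) * (Nat.fib (m/2 + 2) : ℝ) :=
        mul_le_mul (fib_ge _) (fib_ge _) (by positivity) (by positivity)

lemma N_le (m : ℕ) : (N m : ℝ) ≤ goldenRatio ^ (m + 2) := by
  rw [N_fib]
  push_cast
  have hsum : ((m+1)/2 + 1) + (m/2 + 1) = m + 2 := by omega
  calc (Nat.fib ((m+1)/2 + 2) : ℝ) * (Nat.fib (m/2 + 2) : ℝ)
      ≤ goldenRatio ^ ((m+1)/2 + 1) * goldenRatio ^ (m/2 + 1) :=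
        mul_le_mul (fib_le _) (fib_le _) (by positivity) (by positivity)
    _ = goldenRatio ^ (m + 2) := by rw [← pow_add, hsum]

lemma N_three (k : ℕ) : 3 ≤ N (k+2) := by
  have h1 : goldenRatio ^ (k+2) ≤ (N (k+2) : ℝ) := N_ge (k+2)
  have h2 : goldenRatio ^ 2 ≤ goldenRatio ^ (k+2) :=
    pow_le_pow_right₀ one_lt_goldenRatio.le (by omega)
  have h3 : (2:ℝ) < goldenRatio ^ 2 := by
    rw [goldenRatio_sq]; linarith [one_lt_goldenRatio]
  have : (2:ℝ) < (N (k+2) : ℝ) := by linarith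
  have h6 : 2 < N (k+2) := by exact_mod_cast this
  omega

lemma N_sub_ge (k : ℕ) : goldenRatio ^ k ≤ ((N (k+2) - 1 : ℕ) : ℝ) := by
  have h3 := N_three k
  have hc : ((N (k+2) - 1 : ℕ) : ℝ) = (N (k+2) : ℝ) - 1 := by
    have : 1 ≤ N (k+2) := by omega
    push_cast [Nat.cast_sub this]
    ring
  rw [hc]
  have h1 : goldenRatio ^ (k+2) ≤ (N (k+2) : ℝ) := N_ge (k+2)
  have h4 := gold_pow_rec k
  have h5 : (1:ℝ) ≤ goldenRatio ^ (k+1) := one_le_pow₀ one_lt_goldenRatio.le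
  linarith

lemma log_upper (k : ℕ) :
    (Nat.log 2 (N (k+2) - 1) : ℝ) ≤ ((k:ℝ)+4) * Real.logb 2 goldenRatio := by
  set L := Nat.log 2 (N (k+2) - 1) with hL
  have h3 := N_three k
  have hne : N (k+2) - 1 ≠ 0 := by omega
  have h1 : (2:ℝ)^L ≤ ((N (k+2) - 1 : ℕ) : ℝ) := by
    exact_mod_cast Nat.pow_log_le_self 2 hne
  have h2 : ((N (k+2) - 1 : ℕ) : ℝ) ≤ goldenRatio ^ (k+4) := by
    calc ((N (k+2) - 1 : ℕ) : ℝ) ≤ (N (k+2) : ℝ) := by exact_mod_cast Nat.sub_le _ 1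
      _ ≤ goldenRatio ^ (k+4) := N_le (k+2)
  have h4 : (2:ℝ)^L ≤ goldenRatio ^ (k+4) := h1.trans h2
  have h5 := (Real.logb_le_logb (b := 2) (by norm_num) (by positivity)
    (by positivity)).mpr h4
  rw [Real.logb_pow, Real.logb_pow, Real.logb_self_eq_one (by norm_num)] at h5
  push_cast at h5
  linarith

lemma log_lower (k : ℕ) :
    (k:ℝ) * Real.logb 2 goldenRatio - 1 ≤ (Nat.log 2 (N (k+2) - 1) : ℝ) := by
  set L := Nat.log 2 (N (k+2) - 1) with hL
  have h1 : ((N (k+2) - 1 : ℕ) : ℝ) < (2:ℝ)^(L+1) := by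
    exact_mod_cast Nat.lt_pow_succ_log_self (by norm_num) (N (k+2) - 1)
  have h2 : goldenRatio ^ k ≤ (2:ℝ)^(L+1) := le_of_lt (lt_of_le_of_lt (N_sub_ge k) h1)
  have h5 := (Real.logb_le_logb (b := 2) (by norm_num) (by positivity)
    (by positivity)).mpr h2
  rw [Real.logb_pow, Real.logb_pow, Real.logb_self_eq_one (by norm_num)] at h5
  push_cast at h5
  linarith


/-- The 1D RR-LOCO coding scheme is capacity-achieving on the left-most page:
`lim_{m→∞} ⌊log₂(N m - 1)⌋ / (m + 2) = log₂((1 + √5)/2)`. -/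
theorem stmt12 :
    Filter.Tendsto (fun m : ℕ => (Nat.log 2 (N m - 1) : ℝ) / (m + 2)) Filter.atTop
      (nhds (Real.logb 2 ((1 + Real.sqrt 5) / 2))) := by

  set c := Real.logb 2 goldenRatio with hc
  show Filter.Tendsto _ _ (nhds c)
  have hcpos : 0 < c := Real.logb_pos (by norm_num) one_lt_goldenRatio
  -- lower bound function
  have hg : Filter.Tendsto (fun m : ℕ => c - (4*c+1) * ((m:ℝ)+2)⁻¹) atTop (nhds c) := by
    have hs : Filter.Tendsto (fun m : ℕ => (m:ℝ)+2) atTop atTop :=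
      Filter.tendsto_atTop_add_const_right atTop 2 tendsto_natCast_atTop_atTop
    have hinv : Filter.Tendsto (fun m : ℕ => ((m:ℝ)+2)⁻¹) atTop (nhds 0) :=
      hs.inv_tendsto_atTop
    have := (tendsto_const_nhds (x := c) (f := atTop)).sub
      ((tendsto_const_nhds (x := 4*c+1) (f := atTop)).mul hinv)
    simpa using this
  refine tendsto_of_tendsto_of_tendsto_of_le_of_le' hg tendsto_const_nhds ?_ ?_
  · -- eventually lower
    filter_upwards [Filter.eventually_ge_atTop 2] with m hm
    obtain ⟨k, rfl⟩ : ∃ k, m = k + 2 := ⟨m - 2, by omega⟩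
    have hlow := log_lower k
    have hden : (0:ℝ) < (k:ℝ) + 4 := by positivity
    have hcast : ((k+2:ℕ):ℝ) + 2 = (k:ℝ) + 4 := by push_cast; ring
    rw [hcast]
    have key : c - (4*c+1) * ((k:ℝ)+4)⁻¹ = ((k:ℝ) * c - 1) / ((k:ℝ)+4) := by
      field_simp
      ring
    rw [key]
    gcongr

  · filter_upwards [Filter.eventually_ge_atTop 2] with m hm
    obtain ⟨k, rfl⟩ : ∃ k, m = k + 2 := ⟨m - 2, by omega⟩
    have hup := log_upper k
    have hcast : ((k+2:ℕ):ℝ) + 2 = (k:ℝ) + 4 := by push_cast; ring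
    rw [hcast]
    have hden : (0:ℝ) < (k:ℝ) + 4 := by positivity
    rw [div_le_iff₀ hden]
    linarith
end
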